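/- Let A = ℂ[[x,y]]/(xy) (the complete local ring of an ordinary node) with maximal ideal 𝔪 = (x,y). Then Hom_A(𝔪, A), Hom_A(A, 𝔪), and Hom_A(𝔪, 𝔪) are not free A-modules, while Hom_A(A, A) ≅ A is free. -/

import Mathlib

open MvPowerSeries

/-- The complete local ring `A = ℂ[[x,y]]/(xy)` of an ordinary node. -/
noncomputable abbrev NodalLocalRing : Type :=
  MvPowerSeries (Fin 2) ℂ ⧸
    Ideal.span {(MvPowerSeries.X 0 * MvPowerSeries.X 1 : MvPowerSeries (Fin 2) ℂ)}

/-- The maximal ideal `𝔪 = (x, y)` of the nodal local ring. -/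
noncomputable abbrev nodalMaxIdeal : Ideal NodalLocalRing :=
  Ideal.span
    {Ideal.Quotient.mk _ (MvPowerSeries.X 0), Ideal.Quotient.mk _ (MvPowerSeries.X 1)}

namespace NodalProof

set_option maxHeartbeats 1000000
set_option synthInstance.maxHeartbeats 400000

noncomputable section

abbrev R2 : Type := MvPowerSeries (Fin 2) ℂ

abbrev pr : R2 →+* NodalLocalRing := Ideal.Quotient.mk _

abbrev xA : NodalLocalRing := pr (X 0)
abbrev yA : NodalLocalRing := pr (X 1)

lemma X0_ne_zero : (X 0 : R2) ≠ 0 := by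
  intro h
  have := congrArg (coeff (R := ℂ) (Finsupp.single 0 1)) h
  simp [coeff_X] at this

lemma X1_ne_zero : (X 1 : R2) ≠ 0 := by
  intro h
  have := congrArg (coeff (R := ℂ) (Finsupp.single 1 1)) h
  simp [coeff_X] at this

lemma xy_zero : xA * yA = 0 := by
  rw [← map_mul]
  exact (Ideal.Quotient.eq_zero_iff_mem).2 (Ideal.mem_span_singleton_self _)

/-- If `x·c = 0` in `A`, then `c` is divisible by `y`. -/
lemma exists_of_xmul (c : NodalLocalRing) (h : xA * c = 0) : ∃ d, c = yA * d := by
  obtain ⟨C, rfl⟩ := Ideal.Quotient.mk_surjective c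
  rw [← map_mul, Ideal.Quotient.eq_zero_iff_mem, Ideal.mem_span_singleton] at h
  obtain ⟨S, hS⟩ := h
  have hC : C = X 1 * S := by
    apply mul_left_cancel₀ X0_ne_zero
    rw [hS]; ring
  exact ⟨pr S, by rw [hC, map_mul]⟩

/-- If `y·c = 0` in `A`, then `c` is divisible by `x`. -/
lemma exists_of_ymul (c : NodalLocalRing) (h : yA * c = 0) : ∃ d, c = xA * d := by
  obtain ⟨C, rfl⟩ := Ideal.Quotient.mk_surjective c
  rw [← map_mul, Ideal.Quotient.eq_zero_iff_mem, Ideal.mem_span_singleton] at h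
  obtain ⟨S, hS⟩ := h
  have hC : C = X 0 * S := by
    apply mul_left_cancel₀ X1_ne_zero
    calc X 1 * C = X 0 * X 1 * S := hS
    _ = X 1 * (X 0 * S) := by ring
  exact ⟨pr S, by rw [hC, map_mul]⟩

/-- The constant-coefficient ring hom on `A`. -/
def eps : NodalLocalRing →+* ℂ :=
  Ideal.Quotient.lift _ (constantCoeff : R2 →+* ℂ) (by
    intro a ha
    rw [Ideal.mem_span_singleton] at ha
    obtain ⟨s, rfl⟩ := ha
    simp [map_mul, constantCoeff_X])

lemma eps_x : eps xA = 0 := by simp [eps, constantCoeff_X]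

lemma eps_y : eps yA = 0 := by simp [eps, constantCoeff_X]

/-- The "set `x := 0`" truncation on power series. -/
def T (F : R2) : R2 := fun n => if n 0 = 0 then coeff (R := ℂ) n F else 0

lemma coeff_T (F : R2) (n : Fin 2 →₀ ℕ) :
    coeff (R := ℂ) n (T F) = if n 0 = 0 then coeff (R := ℂ) n F else 0 := rfl

/-- "Evaluation at `x = 0`" as a ring homomorphism. -/
def ev : R2 →+* R2 where
  toFun := T
  map_one' := by
    ext n
    rw [coeff_T]
    split_ifs with h
    · rfl
    · rw [coeff_one, if_neg]
      intro hn
      exact h (by rw [hn]; rfl)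
  map_mul' := by
    intro F G
    ext n
    show coeff (R := ℂ) n (T (F * G)) = coeff (R := ℂ) n (T F * T G)
    rw [coeff_T, coeff_mul, coeff_mul]
    by_cases h : n 0 = 0
    · rw [if_pos h]
      refine Finset.sum_congr rfl ?_
      rintro ⟨p, q⟩ hpq
      rw [Finset.HasAntidiagonal.mem_antidiagonal] at hpq
      have hsum : p 0 + q 0 = 0 := by
        have := congrArg (fun f => f 0) hpq
        simpa [Finsupp.add_apply] using this.trans h
      rw [coeff_T, coeff_T, if_pos (Nat.eq_zero_of_add_eq_zero_right hsum),
        if_pos (Nat.eq_zero_of_add_eq_zero_left hsum)]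
    · rw [if_neg h]
      symm
      refine Finset.sum_eq_zero ?_
      rintro ⟨p, q⟩ hpq
      rw [Finset.HasAntidiagonal.mem_antidiagonal] at hpq
      rw [coeff_T, coeff_T]
      by_cases hp : p 0 = 0
      · by_cases hq : q 0 = 0
        · exfalso
          apply h
          have := congrArg (fun f => f 0) hpq
          simpa [Finsupp.add_apply, hp, hq] using this.symm
        · rw [if_neg hq, mul_zero]
      · rw [if_neg hp, zero_mul]
  map_zero' := by
    refine MvPowerSeries.ext fun n => ?_
    rw [coeff_T]
    split_ifs with h
    · rfl
    · exact (map_zero (coeff (R := ℂ) n)).symm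
  map_add' := by
    intro F G
    ext n
    show coeff (R := ℂ) n (T (F + G)) = coeff (R := ℂ) n (T F + T G)
    rw [map_add, coeff_T, coeff_T, coeff_T, map_add]
    split_ifs <;> simp

lemma ev_X0 : ev (X 0) = 0 := by
  refine MvPowerSeries.ext fun n => ?_
  show coeff (R := ℂ) n (T (X 0)) = coeff (R := ℂ) n 0
  rw [coeff_T, (map_zero (coeff (R := ℂ) n))]
  split_ifs with h
  · rw [coeff_X, if_neg]
    intro hn
    rw [hn] at h
    simp at h
  · rfl

lemma ev_X1 : ev (X 1) = X 1 := by
  ext n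
  show coeff (R := ℂ) n (T (X 1)) = coeff (R := ℂ) n (X 1)
  rw [coeff_T]
  split_ifs with h
  · rfl
  · symm
    rw [coeff_X, if_neg]
    intro hn
    rw [hn] at h
    exact h (Finsupp.single_eq_of_ne (by decide))

lemma exists_T_decomp (F : R2) : ∃ G, F = T F + X 0 * G := by
  have hdvd : (X 0 : R2) ∣ (F - T F) :=
    X_dvd_iff.2 fun m hm => by rw [map_sub, coeff_T, if_pos hm, sub_self]
  obtain ⟨G, hG⟩ := hdvd
  exact ⟨G, by rw [← hG]; ring⟩

/-- Evaluation at `x = 0` descends to the quotient `A`. -/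
def eb : NodalLocalRing →+* NodalLocalRing :=
  Ideal.Quotient.lift _ (pr.comp ev) (by
    intro a ha
    rw [Ideal.mem_span_singleton] at ha
    obtain ⟨s, rfl⟩ := ha
    show pr (ev (X 0 * X 1 * s)) = 0
    rw [show (X 0 * X 1 * s : R2) = X 0 * (X 1 * s) from mul_assoc _ _ _,
      map_mul, ev_X0, zero_mul, map_zero])

lemma eb_mk (F : R2) : eb (pr F) = pr (ev F) := rfl

lemma eb_x : eb xA = 0 := by rw [eb_mk, ev_X0, map_zero]

lemma eb_y : eb yA = yA := by rw [eb_mk, ev_X1]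

lemma sub_eb (a : NodalLocalRing) : ∃ s, a = eb a + xA * s := by
  obtain ⟨F, rfl⟩ := Ideal.Quotient.mk_surjective a
  obtain ⟨G, hG⟩ := exists_T_decomp F
  refine ⟨pr G, ?_⟩
  rw [eb_mk]
  conv_lhs => rw [hG]
  rw [map_add, map_mul]
  rfl

lemma eb_mem_y {m : NodalLocalRing} (hm : m ∈ nodalMaxIdeal) : ∃ t, eb m = yA * t := by
  rw [Ideal.mem_span_pair] at hm
  obtain ⟨a, b, rfl⟩ := hm
  refine ⟨eb b, ?_⟩
  rw [map_add, map_mul, map_mul, eb_x, eb_y, mul_zero, zero_add, mul_comm]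

lemma eb_smul {a m : NodalLocalRing} (hm : m ∈ nodalMaxIdeal) :
    eb (a * m) = a * eb m := by
  obtain ⟨s, hs⟩ := sub_eb a
  obtain ⟨t, ht⟩ := eb_mem_y hm
  rw [map_mul, ht]
  conv_rhs => rw [hs]
  have h0 : xA * yA = 0 := xy_zero
  linear_combination (-(s * t)) * h0

lemma y_mem : yA ∈ nodalMaxIdeal :=
  Ideal.subset_span (Set.mem_insert_of_mem _ rfl)

/-- The element `⟨y⟩` of the maximal ideal. -/
def yel : nodalMaxIdeal := ⟨yA, y_mem⟩

/-- The projection `𝔪 → A` sending `x ↦ 0`, `y ↦ y` (kill the `x`-part). -/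
def phi : nodalMaxIdeal →ₗ[NodalLocalRing] NodalLocalRing where
  toFun m := eb m.1
  map_add' m m' := by simp [map_add]
  map_smul' a m := by simpa using eb_smul m.2

lemma phi_apply (m : nodalMaxIdeal) : phi m = eb m.1 := rfl

lemma phi_yel : phi yel = yA := eb_y

lemma x_smul_yel : xA • yel = 0 := by
  apply Subtype.ext
  show xA * yA = 0
  exact xy_zero

/-- Key fact: in a free module over `A`, any element killed by `x` is divisible by `y`. -/
lemma free_div {M : Type} [AddCommGroup M] [Module NodalLocalRing M]
    [Module.Free NodalLocalRing M] (v : M) (hv : xA • v = 0) :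
    ∃ w : M, v = yA • w := by
  classical
  let b := Module.Free.chooseBasis NodalLocalRing M
  have hcoord : ∀ i, xA * b.repr v i = 0 := by
    intro i
    have hz : xA • b.repr v = 0 := by rw [← map_smul, hv, map_zero]
    have hap : (xA • b.repr v) i = xA * b.repr v i := by
      rw [Finsupp.smul_apply, smul_eq_mul]
    rw [← hap, hz, Finsupp.zero_apply]
  choose d hd using fun i => exists_of_xmul (b.repr v i) (hcoord i)
  refine ⟨∑ i ∈ (b.repr v).support, d i • b i, ?_⟩
  rw [Finset.smul_sum]
  conv_lhs => rw [← b.linearCombination_repr v]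
  rw [Finsupp.linearCombination_apply, Finsupp.sum]
  refine Finset.sum_congr rfl fun i _ => ?_
  rw [smul_smul, ← hd i]

lemma contra_aux {u : NodalLocalRing} (h1 : yA = yA * u) (h2 : xA * u = 0) : False := by
  obtain ⟨d, hd⟩ := exists_of_xmul u h2
  have h3 : yA * (1 - yA * d) = 0 := by
    rw [hd] at h1
    linear_combination h1
  obtain ⟨s, hs⟩ := exists_of_ymul _ h3
  have := congrArg eps hs
  simp only [map_sub, map_mul, map_one, eps_x, eps_y, zero_mul] at this
  norm_num at this

lemma contra_aux2 {u : NodalLocalRing} (h1 : yA = yA * u) (hu : u ∈ nodalMaxIdeal) :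
    False := by
  have h3 : yA * (1 - u) = 0 := by linear_combination h1
  obtain ⟨s, hs⟩ := exists_of_ymul _ h3
  have hεu : eps u = 0 := by
    rw [Ideal.mem_span_pair] at hu
    obtain ⟨a, b, rfl⟩ := hu
    simp [map_add, map_mul, eps_x, eps_y]
  have := congrArg eps hs
  simp only [map_sub, map_mul, map_one, eps_x, hεu, zero_mul] at this
  norm_num at this

/-- `Hom(𝔪, A)` is not free. -/
lemma not_free_hom_mA :
    ¬ Module.Free NodalLocalRing (nodalMaxIdeal →ₗ[NodalLocalRing] NodalLocalRing) := by
  intro hF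
  have hxphi : xA • phi = 0 := by
    ext m
    obtain ⟨t, ht⟩ := eb_mem_y m.2
    simp only [LinearMap.smul_apply, LinearMap.zero_apply, smul_eq_mul, phi_apply, ht]
    linear_combination t * xy_zero
  obtain ⟨w, hw⟩ := free_div phi hxphi
  set u := w yel with hu
  have h2 : xA * u = 0 := by
    calc xA * u = xA • w yel := rfl
      _ = w (xA • yel) := (map_smul w _ _).symm
      _ = 0 := by rw [x_smul_yel, map_zero]
  have h1 : yA = yA * u := by
    have happ := DFunLike.congr_fun hw yel
    rw [phi_yel] at happ
    simpa [smul_eq_mul] using happ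
  exact contra_aux h1 h2

/-- `Hom(A, 𝔪)` is not free. -/
lemma not_free_hom_Am :
    ¬ Module.Free NodalLocalRing (NodalLocalRing →ₗ[NodalLocalRing] nodalMaxIdeal) := by
  intro hF
  set ψ := LinearMap.toSpanSingleton NodalLocalRing nodalMaxIdeal yel with hψ
  have hxψ : xA • ψ = 0 := by
    ext
    simp only [LinearMap.smul_apply, LinearMap.zero_apply, ZeroMemClass.coe_zero,
      SetLike.val_smul, smul_eq_mul, hψ, LinearMap.toSpanSingleton_apply, one_smul]
    show xA * yA = 0
    exact xy_zero
  obtain ⟨w, hw⟩ := free_div ψ hxψ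
  have h1 : yA = yA * (w 1).1 := by
    have happ := DFunLike.congr_fun hw 1
    have : yel = yA • w 1 := by simpa [hψ, LinearMap.toSpanSingleton_apply] using happ
    have := congrArg Subtype.val this
    simpa [yel] using this
  exact contra_aux2 h1 (w 1).2

/-- `Hom(𝔪, 𝔪)` is not free. -/
lemma not_free_hom_mm :
    ¬ Module.Free NodalLocalRing (nodalMaxIdeal →ₗ[NodalLocalRing] nodalMaxIdeal) := by
  intro hF
  have hmem : ∀ m : nodalMaxIdeal, phi m ∈ nodalMaxIdeal := by
    intro m
    obtain ⟨t, ht⟩ := eb_mem_y m.2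
    rw [phi_apply, ht]
    exact Ideal.mul_mem_right t _ y_mem
  set φ3 := LinearMap.codRestrict (nodalMaxIdeal : Submodule NodalLocalRing NodalLocalRing)
    phi hmem with hφ3
  have hxφ3 : xA • φ3 = 0 := by
    ext m
    obtain ⟨t, ht⟩ := eb_mem_y m.2
    simp only [LinearMap.smul_apply, LinearMap.zero_apply, ZeroMemClass.coe_zero,
      SetLike.val_smul, smul_eq_mul]
    have hval : (φ3 m).1 = eb m.1 := rfl
    rw [hval, ht]
    linear_combination t * xy_zero
  obtain ⟨w, hw⟩ := free_div φ3 hxφ3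
  set u := (w yel).1 with hu
  have h2 : xA * u = 0 := by
    have : w (xA • yel) = 0 := by rw [x_smul_yel, map_zero]
    rw [map_smul] at this
    have := congrArg Subtype.val this
    simpa [smul_eq_mul] using this
  have h1 : yA = yA * u := by
    have happ := DFunLike.congr_fun hw yel
    have := congrArg Subtype.val happ
    have hval : (φ3 yel).1 = yA := by
      show eb yel.1 = yA
      exact eb_y
    rw [hval] at this
    simpa [smul_eq_mul] using this
  exact contra_aux h1 h2

end

end NodalProof

/-- Among the four `Hom` modules between `A` and `𝔪` over the nodal local ring
`A = ℂ[[x,y]]/(xy)`, only `Hom_A(A, A) ≅ A` is free. -/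
theorem stmt_6 :
    ¬ Module.Free NodalLocalRing (nodalMaxIdeal →ₗ[NodalLocalRing] NodalLocalRing) ∧
    ¬ Module.Free NodalLocalRing (NodalLocalRing →ₗ[NodalLocalRing] nodalMaxIdeal) ∧
    ¬ Module.Free NodalLocalRing (nodalMaxIdeal →ₗ[NodalLocalRing] nodalMaxIdeal) ∧
    Module.Free NodalLocalRing (NodalLocalRing →ₗ[NodalLocalRing] NodalLocalRing) ∧
    Nonempty ((NodalLocalRing →ₗ[NodalLocalRing] NodalLocalRing)
      ≃ₗ[NodalLocalRing] NodalLocalRing) := by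
  refine ⟨NodalProof.not_free_hom_mA, NodalProof.not_free_hom_Am,
    NodalProof.not_free_hom_mm, ?_, ?_⟩
  · exact Module.Free.of_equiv
      (LinearMap.ringLmapEquivSelf NodalLocalRing NodalLocalRing NodalLocalRing).symm
  · exact ⟨LinearMap.ringLmapEquivSelf NodalLocalRing NodalLocalRing NodalLocalRing⟩
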